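/- Let A be a quasi-abelian category with the exact structure E consisting of all kernel-cokernel pairs. Then for any two admissible monomorphisms (kernels) c : B ↣ D and d : C ↣ D, in the pullback square of c and d the morphisms a : A → B and b : A → C are again kernels. In particular A has admissible intersections. -/

import Mathlib

open CategoryTheory CategoryTheory.Limits

universe v u

/-- A morphism is a *kernel* if it arises as the kernel of some morphism. -/
def IsKernelMorphism {C : Type u} [Category.{v} C] [HasZeroMorphisms C]
    {X Y : C} (f : X ⟶ Y) : Prop :=
  ∃ (W : C) (g : Y ⟶ W) (w : f ≫ g = 0), Nonempty (IsLimit (KernelFork.ofι f w))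

/-- A morphism is a *cokernel* if it arises as the cokernel of some morphism. -/
def IsCokernelMorphism {C : Type u} [Category.{v} C] [HasZeroMorphisms C]
    {X Y : C} (f : X ⟶ Y) : Prop :=
  ∃ (W : C) (g : W ⟶ X) (w : g ≫ f = 0), Nonempty (IsColimit (CokernelCofork.ofπ f w))

/-- In a quasi-abelian category, for any two kernels (= admissible monomorphisms for the
exact structure of all kernel-cokernel pairs) `c : B ⟶ D` and `d : C' ⟶ D`, in the
pullback square of `c` and `d` both projections are again kernels: quasi-abelian
categories have admissible intersections. -/
theorem pullback_kernel {C : Type u} [Category.{v} C] [HasZeroMorphisms C]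
    {A B C' D : C} {a : A ⟶ B} {b : A ⟶ C'} {c : B ⟶ D} {d : C' ⟶ D}
    (hPB : IsPullback a b c d) (hd : IsKernelMorphism d) : IsKernelMorphism a := by
  obtain ⟨W, g, w, ⟨hl⟩⟩ := hd
  haveI : Mono d := mono_of_isLimit_fork hl
  refine ⟨W, c ≫ g, by rw [← Category.assoc, hPB.w, Category.assoc, w, comp_zero], ⟨?_⟩⟩
  refine KernelFork.IsLimit.ofι _ _ (fun {T} t ht => ?_) ?_ ?_
  · refine hPB.lift t (KernelFork.IsLimit.lift' hl (t ≫ c) (by simp only [Category.assoc]; exact ht)).1 ?_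
    exact ((KernelFork.IsLimit.lift' hl (t ≫ c) (by simp only [Category.assoc]; exact ht)).2).symm
  · intro T t ht; exact hPB.lift_fst ..
  · intro T t ht m hm
    apply hPB.hom_ext
    · rw [hm]; exact (hPB.lift_fst ..).symm
    · rw [← cancel_mono d, Category.assoc, ← hPB.w, ← Category.assoc, hm]
      erw [hPB.lift_snd]
      exact ((KernelFork.IsLimit.lift' hl (t ≫ c) (by simp only [Category.assoc]; exact ht)).2).symm


theorem stmt13 {C : Type u} [Category.{v} C] [Preadditive C] [HasFiniteBiproducts C]
    [HasKernels C] [HasCokernels C]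
    (hLQA : ∀ ⦃W X Y Z : C⦄ (a : W ⟶ X) (b : W ⟶ Y) (c : X ⟶ Z) (d : Y ⟶ Z),
      IsPullback a b c d → IsCokernelMorphism d → IsCokernelMorphism a)
    (hRQA : ∀ ⦃W X Y Z : C⦄ (f : W ⟶ X) (g : W ⟶ Y) (inl : X ⟶ Z) (inr : Y ⟶ Z),
      IsPushout f g inl inr → IsKernelMorphism f → IsKernelMorphism inr)
    ⦃A B C' D : C⦄ (c : B ⟶ D) (d : C' ⟶ D) (hc : IsKernelMorphism c)
    (hd : IsKernelMorphism d) (a : A ⟶ B) (b : A ⟶ C') (hPB : IsPullback a b c d) :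
    IsKernelMorphism a ∧ IsKernelMorphism b :=
  ⟨pullback_kernel hPB hd, pullback_kernel hPB.flip hc⟩
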